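/- Let c > 0, a > 0, 0 ≤ μ and μ + σ < 0 with σ < −μ, and let φ be continuous with φ(t) ≥ −a/c for all t ≤ 0. Then any solution u of the model DDE on [0,∞) satisfies u(t) > −a/c for all t > 0; moreover, if μ > 0, then u(t) ≤ (φ(0) − N0) e^{μ t} + N0 for all t ≥ 0, where N0 = aσ/(cμ). In particular no solution becomes unbounded in finite time. -/

import Mathlib

open Set Filter Topology

/-- A solution of the model state-dependent DDE
`u'(t) = μ u(t) + σ u(t - a - c u(t))` for `t ≥ 0`, with initial function `φ` on `(-∞,0]`. -/
def IsModelSolution (μ σ c a : ℝ) (φ u : ℝ → ℝ) : Prop :=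
  Continuous u ∧ (∀ t ≤ (0 : ℝ), u t = φ t) ∧
    ∀ t, (0 : ℝ) ≤ t →
      HasDerivWithinAt u (μ * u t + σ * u (t - a - c * u t)) (Set.Ici (0 : ℝ)) t

/-- If the right derivative (within `Ici 0`) is positive, the function increases
immediately to the right. -/
lemma aux_right_incr {u : ℝ → ℝ} {d s : ℝ}
    (h : HasDerivWithinAt u d (Set.Ici (0 : ℝ)) s) (hs : 0 ≤ s) (hd : 0 < d) :
    ∀ᶠ y in 𝓝[>] s, u s < u y := by
  have h1 : Tendsto (slope u s) (𝓝[(Set.Ici (0:ℝ)) \ {s}] s) (𝓝 d) :=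
    hasDerivWithinAt_iff_tendsto_slope.1 h
  have h2 : 𝓝[>] s ≤ 𝓝[(Set.Ici (0:ℝ)) \ {s}] s :=
    nhdsWithin_mono s (fun y hy => ⟨le_trans hs (le_of_lt hy), by simpa using (hy : s < y).ne'⟩)
  have h3 : Tendsto (slope u s) (𝓝[>] s) (𝓝 d) := h1.mono_left h2
  have h4 : ∀ᶠ y in 𝓝[>] s, 0 < slope u s y := h3.eventually_const_lt hd
  filter_upwards [h4, self_mem_nhdsWithin] with y hy hy'
  have hys : (0:ℝ) < y - s := sub_pos.2 hy'
  have : 0 < u y - u s := by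
    have := mul_pos hy hys
    rw [slope_def_field] at this
    have hne : y - s ≠ 0 := ne_of_gt hys
    calc (0:ℝ) < (u y - u s) / (y - s) * (y - s) := this
    _ = u y - u s := div_mul_cancel₀ _ hne
  linarith

/-- If the derivative is positive, the function is smaller immediately to the left. -/
lemma aux_left_decr {u : ℝ → ℝ} {d s : ℝ} (h : HasDerivAt u d s) (hd : 0 < d) :
    ∀ᶠ y in 𝓝[<] s, u y < u s := by
  have h1 : Tendsto (slope u s) (𝓝[≠] s) (𝓝 d) := hasDerivAt_iff_tendsto_slope.1 h
  have h3 : Tendsto (slope u s) (𝓝[<] s) (𝓝 d) :=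
    h1.mono_left (nhdsWithin_mono s (fun y hy => ne_of_lt hy))
  have h4 : ∀ᶠ y in 𝓝[<] s, 0 < slope u s y := h3.eventually_const_lt hd
  filter_upwards [h4, self_mem_nhdsWithin] with y hy hy'
  have hys : y - s < 0 := sub_neg.2 hy'
  have : u y - u s < 0 := by
    have := mul_neg_of_pos_of_neg hy hys
    rw [slope_def_field] at this
    have hne : y - s ≠ 0 := ne_of_lt hys
    calc u y - u s = (u y - u s) / (y - s) * (y - s) := (div_mul_cancel₀ _ hne).symm
    _ < 0 := this
  linarith

/-- part of Theorem 3.3 of Humphries–Magpantay, case `c > 0`, `μ ≥ 0`: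
lower bound on solutions, for `μ > 0` the Gronwall-type exponential upper bound, and in
particular no blow-up in finite time. -/
theorem stmt_6 (μ σ c a : ℝ) (hc : 0 < c) (ha : 0 < a) (hμ0 : 0 ≤ μ)
    (hμσ : μ + σ < 0) (hσμ : σ < -μ)
    (φ : ℝ → ℝ) (hφcont : ContinuousOn φ (Set.Iic 0))
    (hφ : ∀ t ≤ (0 : ℝ), -a / c ≤ φ t)
    (u : ℝ → ℝ) (hsol : IsModelSolution μ σ c a φ u) :
    (∀ t > (0 : ℝ), -a / c < u t) ∧
    (0 < μ → ∀ t ≥ (0 : ℝ),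
      u t ≤ (φ 0 - a * σ / (c * μ)) * Real.exp (μ * t) + a * σ / (c * μ)) ∧
    (∀ T > (0 : ℝ), ∃ C : ℝ, ∀ t ∈ Set.Icc (0 : ℝ) T, |u t| ≤ C) := by
  obtain ⟨hu, hinit, hderiv⟩ := hsol
  set L : ℝ := -a / c with hLdef
  have hL0 : L < 0 := div_neg_of_neg_of_pos (neg_neg_of_pos ha) hc
  have hσ : σ < 0 := lt_of_lt_of_le hσμ (by linarith)
  have h0 : L ≤ u 0 := by rw [hinit 0 le_rfl]; exact hφ 0 le_rfl
  -- at the level `L`, the derivative is positive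
  have hdpos : 0 < (μ + σ) * L := mul_pos_of_neg_of_neg hμσ hL0
  have hkey : ∀ s, 0 ≤ s → u s = L → HasDerivWithinAt u ((μ + σ) * L) (Set.Ici (0:ℝ)) s := by
    intro s hs hus
    have harg : s - a - c * u s = s := by
      rw [hus, hLdef]; field_simp; ring
    have := hderiv s hs
    rw [harg, hus] at this
    convert this using 1; ring
  -- no strict crossing below `L`
  have hC : ∀ t1 > (0:ℝ), ¬ u t1 < L := by
    intro t1 ht1 hlt
    set S : Set ℝ := {t | t ∈ Set.Icc 0 t1 ∧ L ≤ u t} with hSdef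
    have hSne : S.Nonempty := ⟨0, ⟨le_rfl, le_of_lt ht1⟩, h0⟩
    have hSclosed : IsClosed S := by
      have : S = Set.Icc 0 t1 ∩ u ⁻¹' Set.Ici L := by ext x; exact Iff.rfl
      rw [this]
      exact isClosed_Icc.inter (isClosed_Ici.preimage hu)
    have hScomp : IsCompact S :=
      isCompact_Icc.of_isClosed_subset hSclosed (fun x hx => hx.1)
    set s := sSup S with hsdef
    have hsS : s ∈ S := hScomp.sSup_mem hSne
    have hs0 : 0 ≤ s := hsS.1.1
    have hst1 : s < t1 := lt_of_le_of_ne hsS.1.2 (fun h => absurd hsS.2 (by rw [h]; exact not_le.2 hlt))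
    have hless : ∀ y, s < y → y ≤ t1 → u y < L := by
      intro y hy hy1
      by_contra hge
      push_neg at hge
      have : y ∈ S := ⟨⟨le_trans hs0 hy.le, hy1⟩, hge⟩
      exact absurd (le_csSup hScomp.bddAbove this) (not_le.2 hy)
    have husL : u s = L := by
      refine le_antisymm ?_ hsS.2
      have htend : Tendsto u (𝓝[>] s) (𝓝 (u s)) :=
        (hu.tendsto s).mono_left nhdsWithin_le_nhds
      refine le_of_tendsto htend ?_
      filter_upwards [Ioo_mem_nhdsGT_of_mem (⟨le_rfl, hst1⟩ : s ∈ Set.Ico s t1)] with y hy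
      exact (hless y hy.1 hy.2.le).le
    have hev1 := aux_right_incr (hkey s hs0 husL) hs0 hdpos
    have hev2 : ∀ᶠ y in 𝓝[>] s, u y < L := by
      filter_upwards [Ioo_mem_nhdsGT_of_mem (⟨le_rfl, hst1⟩ : s ∈ Set.Ico s t1)] with y hy
      exact hless y hy.1 hy.2.le
    obtain ⟨y, hy1, hy2⟩ := (hev1.and hev2).exists
    rw [husL] at hy1
    exact absurd hy2 (not_lt.2 hy1.le)
  -- the strict lower bound
  have part1 : ∀ t > (0:ℝ), L < u t := by
    intro t ht
    rcases lt_trichotomy (u t) L with h | h | h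
    · exact absurd h (hC t ht)
    · -- u t = L with t > 0: derivative positive, so u < L just left of t, contradiction
      have hd : HasDerivAt u ((μ + σ) * L) t :=
        (hkey t ht.le h).hasDerivAt (Ici_mem_nhds ht)
      have hev := aux_left_decr hd hdpos
      have hev2 : Set.Ioo 0 t ∈ 𝓝[<] t := Ioo_mem_nhdsLT_of_mem ⟨ht, le_rfl⟩
      obtain ⟨y, hy1, hy2⟩ := (hev.and hev2).exists
      rw [h] at hy1
      exact absurd hy1 (hC y hy2.1)
    · exact h
  have hLall : ∀ t : ℝ, L ≤ u t := by
    intro t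
    rcases le_or_gt t 0 with h | h
    · rw [hinit t h]; exact hφ t h
    · exact (part1 t h).le
  refine ⟨part1, ?_, ?_⟩
  · -- Gronwall-type bound
    intro hμ t ht
    set N : ℝ := a * σ / (c * μ) with hNdef
    have hμN : μ * N = a * σ / c := by rw [hNdef]; field_simp
    set f : ℝ → ℝ := fun x => (u x - N) * Real.exp (-μ * x) with hfdef
    have hexp : ∀ x : ℝ, HasDerivAt (fun y => Real.exp (-μ * y)) (Real.exp (-μ * x) * -μ) x := by
      intro x
      have h1 : HasDerivAt (fun y : ℝ => -μ * y) (-μ) x := by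
        simpa using (hasDerivAt_id x).const_mul (-μ)
      simpa [Function.comp_def] using (Real.hasDerivAt_exp (-μ * x)).comp x h1
    have hmain : ∀ x ∈ Set.Icc (0:ℝ) t, f x ≤ φ 0 - N := by
      refine image_le_of_deriv_right_le_deriv_boundary (f' := fun x =>
          (μ * u x + σ * u (x - a - c * u x)) * Real.exp (-μ * x)
            + (u x - N) * (Real.exp (-μ * x) * -μ))
          (B := fun _ => φ 0 - N) (B' := fun _ => 0) ?_ ?_ ?_ continuousOn_const
          (fun x _ => hasDerivWithinAt_const x _ _) ?_
      · exact ((hu.sub continuous_const).mul (by continuity)).continuousOn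
      · intro x hx
        exact ((hderiv x hx.1).mono (Set.Ici_subset_Ici.2 hx.1)).sub_const N |>.mul
          (hexp x).hasDerivWithinAt
      · simp [hfdef, hinit 0 le_rfl]
      · intro x hx
        have hdel : σ * u (x - a - c * u x) ≤ σ * L :=
          mul_le_mul_of_nonpos_left (hLall _) hσ.le
        have hsum : σ * u (x - a - c * u x) + μ * N ≤ 0 := by
          have : σ * L + μ * N = 0 := by rw [hLdef, hμN]; field_simp; ring
          linarith
        have heq : (μ * u x + σ * u (x - a - c * u x)) * Real.exp (-μ * x)
            + (u x - N) * (Real.exp (-μ * x) * -μ)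
            = Real.exp (-μ * x) * (σ * u (x - a - c * u x) + μ * N) := by ring
        show (μ * u x + σ * u (x - a - c * u x)) * Real.exp (-μ * x)
            + (u x - N) * (Real.exp (-μ * x) * -μ) ≤ 0
        rw [heq]
        exact mul_nonpos_of_nonneg_of_nonpos (Real.exp_pos _).le hsum
    have hft := hmain t ⟨ht, le_rfl⟩
    have hE : (0:ℝ) < Real.exp (μ * t) := Real.exp_pos _
    rw [hfdef] at hft
    simp only at hft
    rw [show -μ * t = -(μ * t) by ring, Real.exp_neg, ← div_eq_mul_inv,
      div_le_iff₀ hE] at hft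
    linarith
  · -- boundedness on compact intervals
    intro T _
    obtain ⟨C, hC⟩ := isCompact_Icc.exists_bound_of_continuousOn
      (s := Set.Icc (0:ℝ) T) hu.continuousOn
    exact ⟨C, fun t htm => by simpa [Real.norm_eq_abs] using hC t htm⟩
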